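/- Let {φₙ}ₙ∈ℕ be an orthonormal basis of H, g ∈ H with ‖g‖ = 1, and consider the finite family Φ_N = {g, φ₁, …, φ_{N−1}}. The optimal Riesz bounds A_N, B_N of Φ_N (i.e., the extreme values of ‖c₀ g + ∑ₙ₌₁^{N−1} cₙφₙ‖² over unit coefficient vectors) are A_N = 1 − √(∑ₙ₌₁^{N−1} |⟨g, φₙ⟩|²) and B_N = 1 + √(∑ₙ₌₁^{N−1} |⟨g, φₙ⟩|²). -/

import Mathlib

open scoped InnerProductSpace
open Complex

/-- Exact Riesz bounds of the finite family `{g, φ₁, …, φ_{N−1}}` obtained by augmenting an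
orthonormal basis with a unit vector `g`:
`A_N = 1 − √(∑_{n<N−1} |⟨g,φₙ⟩|²)` and `B_N = 1 + √(∑_{n<N−1} |⟨g,φₙ⟩|²)`. -/
theorem stmt_8 {H : Type*} [NormedAddCommGroup H] [InnerProductSpace ℂ H]
    [CompleteSpace H] (b : HilbertBasis ℕ ℂ H) (g : H) (hg : ‖g‖ = 1)
    (hinf : {n : ℕ | ⟪g, b n⟫_ℂ ≠ 0}.Infinite) (N : ℕ) (hN : 0 < N) :
    IsLeast {r : ℝ | ∃ (c₀ : ℂ) (c : Fin (N - 1) → ℂ),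
        ‖c₀‖ ^ 2 + ∑ i, ‖c i‖ ^ 2 = 1 ∧
        r = ‖c₀ • g + ∑ i : Fin (N - 1), c i • b (i : ℕ)‖ ^ 2}
      (1 - Real.sqrt (∑ i : Fin (N - 1), ‖⟪g, b (i : ℕ)⟫_ℂ‖ ^ 2)) ∧
    IsGreatest {r : ℝ | ∃ (c₀ : ℂ) (c : Fin (N - 1) → ℂ),
        ‖c₀‖ ^ 2 + ∑ i, ‖c i‖ ^ 2 = 1 ∧
        r = ‖c₀ • g + ∑ i : Fin (N - 1), c i • b (i : ℕ)‖ ^ 2}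
      (1 + Real.sqrt (∑ i : Fin (N - 1), ‖⟪g, b (i : ℕ)⟫_ℂ‖ ^ 2)) := by
  set M := N - 1 with hM
  set S : ℝ := ∑ i : Fin M, ‖⟪g, b (i : ℕ)⟫_ℂ‖ ^ 2 with hSdef
  have hS0 : 0 ≤ S := Finset.sum_nonneg fun i _ => sq_nonneg _
  set s : ℝ := Real.sqrt S with hsdef
  have hs0 : 0 ≤ s := Real.sqrt_nonneg _
  have hs2 : s ^ 2 = S := Real.sq_sqrt hS0
  have hon : Orthonormal ℂ (fun i : Fin M => b (i : ℕ)) :=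
    b.orthonormal.comp _ Fin.val_injective
  -- key norm identity
  have key : ∀ (c₀ : ℂ) (c : Fin M → ℂ), ‖c₀‖ ^ 2 + ∑ i, ‖c i‖ ^ 2 = 1 →
      ‖c₀ • g + ∑ i : Fin M, c i • b (i : ℕ)‖ ^ 2
        = 1 + 2 * Complex.re ((starRingEnd ℂ) c₀ * ∑ i, c i * ⟪g, b (i:ℕ)⟫_ℂ) := by
    intro c₀ c hc
    have h1 : ‖∑ i : Fin M, c i • b (i:ℕ)‖ ^ 2 = ∑ i, ‖c i‖ ^ 2 := by
      rw [@norm_sq_eq_re_inner ℂ]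
      rw [show (∑ i : Fin M, c i • b (i:ℕ))
          = ∑ i ∈ Finset.univ, c i • (fun j : Fin M => b (j:ℕ)) i from rfl]
      rw [hon.inner_sum]
      simp [RCLike.conj_mul]; norm_cast
    have h2 : ⟪c₀ • g, ∑ i : Fin M, c i • b (i:ℕ)⟫_ℂ
        = (starRingEnd ℂ) c₀ * ∑ i, c i * ⟪g, b (i:ℕ)⟫_ℂ := by
      rw [inner_smul_left, inner_sum]
      simp [inner_smul_right]
    have h3 := @norm_add_sq ℂ _ _ _ _ (c₀ • g) (∑ i : Fin M, c i • b (i:ℕ))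
    rw [h1, h2] at h3
    have h4 : ‖c₀ • g‖ ^ 2 = ‖c₀‖ ^ 2 := by rw [norm_smul, hg, mul_one]
    simp only [RCLike.re_to_complex] at h3
    rw [h3, h4]; linarith
  -- bound on the cross term
  have bound : ∀ (c₀ : ℂ) (c : Fin M → ℂ), ‖c₀‖ ^ 2 + ∑ i, ‖c i‖ ^ 2 = 1 →
      |2 * Complex.re ((starRingEnd ℂ) c₀ * ∑ i, c i * ⟪g, b (i:ℕ)⟫_ℂ)| ≤ s := by
    intro c₀ c hc
    set T : ℂ := ∑ i, c i * ⟪g, b (i:ℕ)⟫_ℂ with hT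
    set W : ℝ := ∑ i : Fin M, ‖c i‖ ^ 2 with hW
    have hW0 : 0 ≤ W := Finset.sum_nonneg fun i _ => sq_nonneg _
    set w : ℝ := Real.sqrt W with hw
    have hw0 : 0 ≤ w := Real.sqrt_nonneg _
    have hw2 : w ^ 2 = W := Real.sq_sqrt hW0
    have hTle : ‖T‖ ≤ w * s := by
      calc ‖T‖ ≤ ∑ i : Fin M, ‖c i * ⟪g, b (i:ℕ)⟫_ℂ‖ := norm_sum_le _ _
        _ = ∑ i : Fin M, ‖c i‖ * ‖⟪g, b (i:ℕ)⟫_ℂ‖ := by simp [norm_mul]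
        _ ≤ w * s := by
            have hcs := Finset.sum_mul_sq_le_sq_mul_sq Finset.univ
              (fun i : Fin M => ‖c i‖) (fun i => ‖⟪g, b (i:ℕ)⟫_ℂ‖)
            have hnn : (0:ℝ) ≤ ∑ i : Fin M, ‖c i‖ * ‖⟪g, b (i:ℕ)⟫_ℂ‖ :=
              Finset.sum_nonneg fun i _ => mul_nonneg (norm_nonneg _) (norm_nonneg _)
            nlinarith [mul_nonneg hw0 hs0]
    have hre : |Complex.re ((starRingEnd ℂ) c₀ * T)| ≤ ‖c₀‖ * ‖T‖ := by
      calc |Complex.re ((starRingEnd ℂ) c₀ * T)| ≤ ‖(starRingEnd ℂ) c₀ * T‖ :=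
            Complex.abs_re_le_norm _
        _ = ‖c₀‖ * ‖T‖ := by rw [norm_mul, RCLike.norm_conj]
    have hc0 : 0 ≤ ‖c₀‖ := norm_nonneg _
    have huw : ‖c₀‖ * w ≤ 1 / 2 := by nlinarith [sq_nonneg (‖c₀‖ - w)]
    have hfin : ‖c₀‖ * ‖T‖ ≤ s / 2 := by nlinarith [norm_nonneg T]
    rw [abs_mul, _root_.abs_of_nonneg (by norm_num : (0:ℝ) ≤ 2)]
    linarith [hre.trans hfin]
  -- membership of 1 + ε s
  have hmem : ∀ ε : ℝ, ε ^ 2 = 1 → (1 + ε * s) ∈ {r : ℝ | ∃ (c₀ : ℂ) (c : Fin M → ℂ),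
      ‖c₀‖ ^ 2 + ∑ i, ‖c i‖ ^ 2 = 1 ∧
      r = ‖c₀ • g + ∑ i : Fin M, c i • b (i : ℕ)‖ ^ 2} := by
    intro ε hε
    rcases eq_or_lt_of_le hS0 with hS | hS
    · refine ⟨1, 0, by simp, ?_⟩
      have hz : s = 0 := by rw [hsdef, ← hS, Real.sqrt_zero]
      rw [key 1 0 (by simp)]
      simp [hz]
    · have hspos : 0 < s := Real.sqrt_pos.mpr hS
      have h2 : (Real.sqrt 2) ^ 2 = 2 := Real.sq_sqrt (by norm_num)
      have h2pos : (0:ℝ) < Real.sqrt 2 := Real.sqrt_pos.mpr (by norm_num)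
      set c : Fin M → ℂ := fun i => (↑(ε / (Real.sqrt 2 * s)) : ℂ) *
        (starRingEnd ℂ) ⟪g, b (i:ℕ)⟫_ℂ with hcdef
      have hcon : ‖(((Real.sqrt 2)⁻¹ : ℝ) : ℂ)‖ ^ 2 + ∑ i, ‖c i‖ ^ 2 = 1 := by
        have hterm : ∀ i : Fin M, ‖c i‖ ^ 2 = (1 / (2 * S)) * ‖⟪g, b (i:ℕ)⟫_ℂ‖ ^ 2 := by
          intro i
          rw [hcdef]
          rw [norm_mul, RCLike.norm_conj, Complex.norm_real, Real.norm_eq_abs, mul_pow,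
            _root_.sq_abs, div_pow, mul_pow, h2, hs2, hε]
        rw [Finset.sum_congr rfl fun i _ => hterm i, ← Finset.mul_sum, ← hSdef,
          Complex.norm_real, Real.norm_eq_abs, _root_.sq_abs, inv_pow, h2]
        field_simp
        ring
      refine ⟨(((Real.sqrt 2)⁻¹ : ℝ) : ℂ), c, hcon, ?_⟩
      rw [key _ _ hcon]
      have hsum : (∑ i : Fin M, c i * ⟪g, b (i:ℕ)⟫_ℂ)
          = ((ε / (Real.sqrt 2 * s) * S : ℝ) : ℂ) := by
        rw [Finset.sum_congr rfl (fun i _ => by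
          rw [hcdef, mul_assoc, RCLike.conj_mul]), ← Finset.mul_sum]
        rw [hSdef]
        push_cast
        rfl
      rw [hsum, Complex.conj_ofReal, ← Complex.ofReal_mul, Complex.ofReal_re]
      have : (Real.sqrt 2)⁻¹ * (ε / (Real.sqrt 2 * s) * S) = ε * s / 2 := by
        rw [← hs2]
        have h22 : Real.sqrt 2 * Real.sqrt 2 = 2 := Real.mul_self_sqrt (by norm_num)
        field_simp
        linear_combination (-ε) * h22
      rw [this]
      ring
  refine ⟨⟨?_, fun r hr => ?_⟩, ⟨?_, fun r hr => ?_⟩⟩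
  · have h := hmem (-1) (by norm_num)
    simpa [sub_eq_add_neg, neg_mul] using h
  · obtain ⟨c₀, c, hc, rfl⟩ := hr
    have := bound c₀ c hc
    rw [key c₀ c hc]
    have := abs_le.mp this
    linarith [this.1]
  · simpa using hmem 1 (by norm_num)
  · obtain ⟨c₀, c, hc, rfl⟩ := hr
    have := bound c₀ c hc
    rw [key c₀ c hc]
    have := abs_le.mp this
    linarith [this.2]
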